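/- Let O_v be a discrete valuation ring with fraction field K and let F^vK denote the v-adic filtration: F^v_nK = {x ∈ K : v(x) ≥ -n} (so F^v_0K = O_v). Then every irreducible left F^vK-glider ideal L inside K equals F^v_nK for some n ∈ ℤ, with chain L_i = F^v_{n-i}K. Consequently, the glider Brauer-Severi set GBS_{F^v}(K) is in bijection with ℤ. -/

import Mathlib

/-- A ℤ-filtration on a ring `A` by additive subgroups (= ℤ-submodules):
an ascending chain with `F n * F m ⊆ F (n+m)` and `1 ∈ F 0`. -/
def IsIntFiltration {A : Type*} [Ring A] (F : ℤ → Submodule ℤ A) : Prop :=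
  Monotone F ∧ (1 : A) ∈ F 0 ∧
    ∀ (n m : ℤ), ∀ x ∈ F n, ∀ y ∈ F m, x * y ∈ F (n + m)

/-- A left `F`-glider ideal inside `A`: a descending chain of additive subgroups
with `F i * M j ⊆ M (j - i)` for `i ≤ j`. -/
def IsGlider {A : Type*} [Ring A] (F : ℤ → Submodule ℤ A) (M : ℕ → Submodule ℤ A) : Prop :=
  Antitone M ∧
    ∀ (i : ℤ) (j : ℕ), i ≤ (j : ℤ) →
      ∀ a ∈ F i, ∀ m ∈ M j, a * m ∈ M ((j : ℤ) - i).toNat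

/-- The body of a glider: `B(M) = ⋂ᵢ Mᵢ`. -/
def gliderBody {A : Type*} [Ring A] (M : ℕ → Submodule ℤ A) : Submodule ℤ A := ⨅ i, M i

/-- Triviality of a subglider `N` of `M`: type T1, T2 or T3. -/
def IsTrivialSubglider {A : Type*} [Ring A] (M N : ℕ → Submodule ℤ A) : Prop :=
  (∃ n, N n = gliderBody N ∧ M n ≠ gliderBody M) ∨
  (∃ n, N n = ⊥ ∧ M n ≠ ⊥) ∨
  (∃ α : ℕ → ℕ, Monotone α ∧ (∀ n, N n = M (α n)) ∧
      ∀ m n : ℕ, m ≤ n → (α (n - m) : ℤ) ≤ (α n : ℤ) - (m : ℤ))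

/-- An irreducible glider: every subglider is trivial. -/
def IsIrreducibleGlider {A : Type*} [Ring A] (F : ℤ → Submodule ℤ A)
    (M : ℕ → Submodule ℤ A) : Prop :=
  IsGlider F M ∧
    ∀ N : ℕ → Submodule ℤ A, IsGlider F N → (∀ i, N i ≤ M i) → IsTrivialSubglider M N

section
variable {K : Type*} [Field K] (v : K → WithTop ℤ)
    (hv0 : ∀ x : K, v x = ⊤ ↔ x = 0)
    (hvmul : ∀ x y : K, v (x * y) = v x + v y)
    (hsurj : ∀ n : ℤ, ∃ x : K, v x = (n : WithTop ℤ))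
    (F : ℤ → Submodule ℤ K)
    (hF : ∀ (n : ℤ) (x : K), x ∈ F n ↔ ((-n : ℤ) : WithTop ℤ) ≤ v x)

include hv0 in
lemma vzero' : v 0 = ⊤ := (hv0 0).mpr rfl

include hv0 hvmul in
lemma vone' : v 1 = 0 := by
  have h1 : (1:K) ≠ 0 := one_ne_zero
  have := hvmul 1 1
  rw [one_mul] at this
  obtain ⟨c, hc⟩ := WithTop.ne_top_iff_exists.mp (fun h => h1 ((hv0 1).mp h))
  rw [← hc] at this
  have : c = c + c := by exact_mod_cast this
  have : c = 0 := by omega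
  rw [← hc, this]; rfl

include hv0 hvmul in
lemma vinv' (x : K) (c : ℤ) (h : v x = (c : WithTop ℤ)) : v x⁻¹ = ((-c : ℤ) : WithTop ℤ) := by
  have hx : x ≠ 0 := fun h0 => by simp [h0, vzero' v hv0] at h
  have h2 : v (x * x⁻¹) = v x + v x⁻¹ := hvmul _ _
  rw [mul_inv_cancel₀ hx, vone' v hv0 hvmul, h] at h2
  obtain ⟨e, he⟩ := WithTop.ne_top_iff_exists.mp
    (fun ht => (inv_ne_zero hx) ((hv0 _).mp ht))
  rw [← he] at h2 ⊢
  have : (0:ℤ) = c + e := by exact_mod_cast h2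
  have : e = -c := by omega
  rw [this]
end
section
variable {K : Type*} [Field K] (v : K → WithTop ℤ)
    (hv0 : ∀ x : K, v x = ⊤ ↔ x = 0)
    (hvmul : ∀ x y : K, v (x * y) = v x + v y)
    (hsurj : ∀ n : ℤ, ∃ x : K, v x = (n : WithTop ℤ))
    (F : ℤ → Submodule ℤ K)
    (hF : ∀ (n : ℤ) (x : K), x ∈ F n ↔ ((-n : ℤ) : WithTop ℤ) ≤ v x)

include hv0 hsurj in
lemma existsv' (n : ℤ) : ∃ x : K, x ≠ 0 ∧ v x = (n : WithTop ℤ) := by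
  obtain ⟨x, hx⟩ := hsurj n
  exact ⟨x, fun h0 => by simp [h0, vzero' v hv0] at hx, hx⟩

include hF in
lemma Fmono' : Monotone F := by
  intro a b hab x hx
  rw [hF] at hx ⊢
  exact le_trans (by exact_mod_cast (by omega : -b ≤ -a)) hx

include hv0 hF in
lemma zero_memF' (n : ℤ) : (0:K) ∈ F n := by
  rw [hF, vzero' v hv0]; exact le_top

include hv0 hsurj hF in
lemma Fle' (a b : ℤ) (h : F a ≤ F b) : a ≤ b := by
  obtain ⟨x, hx0, hx⟩ := existsv' v hv0 hsurj (-a)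
  have : x ∈ F a := by rw [hF, hx]
  have := (hF b x).mp (h this)
  rw [hx] at this
  have : -b ≤ -a := by exact_mod_cast this
  omega

include hv0 hsurj hF in
lemma Fne_bot' (n : ℤ) : F n ≠ ⊥ := by
  obtain ⟨x, hx0, hx⟩ := existsv' v hv0 hsurj (-n)
  intro h
  have : x ∈ F n := by rw [hF, hx]
  rw [h, Submodule.mem_bot] at this
  exact hx0 this

include hv0 hsurj hF in
lemma Fne_top' (n : ℤ) : F n ≠ ⊤ := by
  obtain ⟨x, hx0, hx⟩ := existsv' v hv0 hsurj (-(n+1))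
  intro h
  have : x ∈ F n := h ▸ Submodule.mem_top
  rw [hF, hx] at this
  have : -n ≤ -(n+1) := by exact_mod_cast this
  omega

include hv0 hvmul hsurj hF in
lemma cover' (n m : ℤ) (y : K) (hy : y ∈ F (n + m)) :
    ∃ a ∈ F n, ∃ b ∈ F m, y = a * b := by
  by_cases hy0 : y = 0
  · exact ⟨0, zero_memF' v hv0 F hF n, 0, zero_memF' v hv0 F hF m, by simp [hy0]⟩
  obtain ⟨a, ha0, ha⟩ := existsv' v hv0 hsurj (-n)
  obtain ⟨c, hc⟩ := WithTop.ne_top_iff_exists.mp (fun h => hy0 ((hv0 y).mp h))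
  refine ⟨a, by rw [hF, ha], a⁻¹ * y, ?_, by field_simp⟩
  rw [hF, hvmul, vinv' v hv0 hvmul a (-n) ha, ← hc]
  have hcy : ((-(n+m) : ℤ) : WithTop ℤ) ≤ (c : WithTop ℤ) := by rw [hc]; exact (hF _ _).mp hy
  have : -(n+m) ≤ c := by exact_mod_cast hcy
  exact_mod_cast (by omega : -m ≤ -(-n) + c)
end
section
variable {K : Type*} [Field K] (v : K → WithTop ℤ)
    (hv0 : ∀ x : K, v x = ⊤ ↔ x = 0)
    (hvmul : ∀ x y : K, v (x * y) = v x + v y)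
    (hsurj : ∀ n : ℤ, ∃ x : K, v x = (n : WithTop ℤ))
    (F : ℤ → Submodule ℤ K)
    (hF : ∀ (n : ℤ) (x : K), x ∈ F n ↔ ((-n : ℤ) : WithTop ℤ) ≤ v x)

include hv0 hvmul hF in
lemma classify' (L : Submodule ℤ K)
    (hO : ∀ a ∈ F 0, ∀ x ∈ L, a * x ∈ L) (h1 : L ≠ ⊥) (h2 : L ≠ ⊤) :
    ∃ m : ℤ, L = F m := by
  -- the set of values of nonzero elements of L
  set S : ℤ → Prop := fun c => ∃ x ∈ L, v x = (c : WithTop ℤ) with hS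
  have hSne : ∃ c, S c := by
    obtain ⟨x, hxL, hx0⟩ := Submodule.exists_mem_ne_zero_of_ne_bot h1
    obtain ⟨c, hc⟩ := WithTop.ne_top_iff_exists.mp (fun h => hx0 ((hv0 x).mp h))
    exact ⟨c, x, hxL, hc.symm⟩
  -- key step: scaling by things of nonnegative value
  have key : ∀ x ∈ L, ∀ (c c' : ℤ), v x = (c : WithTop ℤ) → c ≤ c' →
      ∀ y : K, v y = (c' : WithTop ℤ) → y ∈ L := by
    intro x hxL c c' hvx hcc' y hvy
    have hx0 : x ≠ 0 := fun h0 => by simp [h0, vzero' v hv0] at hvx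
    have hmem : y * x⁻¹ ∈ F 0 := by
      rw [hF, hvmul, vinv' v hv0 hvmul x c hvx, hvy]
      exact_mod_cast (by omega : -(0:ℤ) ≤ c' + -c)
    have := hO _ hmem _ hxL
    rwa [inv_mul_cancel_right₀ hx0] at this
  by_cases hbd : ∃ b : ℤ, ∀ c, S c → b ≤ c
  · obtain ⟨c₀, ⟨x₀, hx₀L, hvx₀⟩, hleast⟩ := Int.exists_least_of_bdd hbd hSne
    refine ⟨-c₀, le_antisymm ?_ ?_⟩
    · intro x hxL
      rw [hF]
      by_cases hx0 : x = 0
      · rw [hx0, vzero' v hv0]; exact le_top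
      obtain ⟨c, hc⟩ := WithTop.ne_top_iff_exists.mp (fun h => hx0 ((hv0 x).mp h))
      have := hleast c ⟨x, hxL, hc.symm⟩
      rw [← hc]
      exact_mod_cast (by omega : -(-c₀) ≤ c)
    · intro y hy
      rw [hF] at hy
      by_cases hy0 : y = 0
      · rw [hy0]; exact L.zero_mem
      obtain ⟨c, hc⟩ := WithTop.ne_top_iff_exists.mp (fun h => hy0 ((hv0 y).mp h))
      have hcc : c₀ ≤ c := by
        rw [← hc] at hy
        have : -(-c₀) ≤ c := by exact_mod_cast hy
        omega
      exact key _ hx₀L c₀ c hvx₀ hcc y hc.symm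
  · exfalso
    apply h2
    rw [Submodule.eq_top_iff']
    intro y
    by_cases hy0 : y = 0
    · rw [hy0]; exact L.zero_mem
    obtain ⟨c, hc⟩ := WithTop.ne_top_iff_exists.mp (fun h => hy0 ((hv0 y).mp h))
    push_neg at hbd
    obtain ⟨c', hc', hlt⟩ := hbd c
    obtain ⟨x, hxL, hvx⟩ := hc'
    exact key _ hxL c' c hvx (by omega) y hc.symm
end
section
variable {K : Type*} [Field K] (v : K → WithTop ℤ)
    (hv0 : ∀ x : K, v x = ⊤ ↔ x = 0)
    (hvmul : ∀ x y : K, v (x * y) = v x + v y)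
    (hsurj : ∀ n : ℤ, ∃ x : K, v x = (n : WithTop ℤ))
    (F : ℤ → Submodule ℤ K)
    (hF : ∀ (n : ℤ) (x : K), x ∈ F n ↔ ((-n : ℤ) : WithTop ℤ) ≤ v x)

-- if x lies in every F (n - i), then x = 0
include hv0 hF in
lemma bodyBot' (n : ℤ) : gliderBody (fun i : ℕ => F (n - (i : ℤ))) = ⊥ := by
  rw [gliderBody, eq_bot_iff]
  intro x hx
  rw [Submodule.mem_iInf] at hx
  rw [Submodule.mem_bot]
  by_contra hx0
  obtain ⟨c, hc⟩ := WithTop.ne_top_iff_exists.mp (fun h => hx0 ((hv0 x).mp h))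
  obtain ⟨i, hi⟩ : ∃ i : ℕ, c + 1 ≤ -(n - (i:ℤ)) := ⟨(c + 1 + n).toNat, by omega⟩
  have := (hF _ _).mp (hx i)
  rw [← hc] at this
  have h2 : -(n - (i:ℤ)) ≤ c := by exact_mod_cast this
  omega

-- nonzero propagation
include hv0 hsurj hF in
lemma glider_ne_bot' (L : ℕ → Submodule ℤ K) (hg : IsGlider F L) (h0 : L 0 ≠ ⊥) :
    ∀ j : ℕ, L j ≠ ⊥ := by
  intro j hbot
  obtain ⟨x, hxL, hx0⟩ := Submodule.exists_mem_ne_zero_of_ne_bot h0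
  obtain ⟨a, ha0, hva⟩ := existsv' v hv0 hsurj j
  have haF : a ∈ F (-(j:ℤ)) := by
    rw [hF, hva]
    have : -(-(j:ℤ)) ≤ (j:ℤ) := by omega
    exact_mod_cast this
  have := hg.2 (-(j:ℤ)) 0 (by omega) a haF x hxL
  have hj : ((0:ℕ) : ℤ) - (-(j:ℤ)) = (j:ℤ) := by omega
  rw [hj, Int.toNat_natCast, hbot, Submodule.mem_bot] at this
  exact (mul_ne_zero ha0 hx0) this

-- covering inclusion
include hv0 hvmul hsurj hF in
lemma shiftIncl' (L : ℕ → Submodule ℤ K) (hg : IsGlider F L) (j : ℕ) (n : ℤ)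
    (hj : L j = F n) (i : ℤ) (hij : i ≤ (j:ℤ)) : F (n + i) ≤ L ((j:ℤ) - i).toNat := by
  intro y hy
  have : y ∈ F (i + n) := by rwa [add_comm]
  obtain ⟨a, ha, b, hb, rfl⟩ := cover' v hv0 hvmul hsurj F hF i n y this
  exact hg.2 i j hij a ha b (hj ▸ hb)

-- slope
include hv0 hvmul hsurj hF in
lemma slope' (L : ℕ → Submodule ℤ K) (hg : IsGlider F L) (m : ℕ → ℤ)
    (hm : ∀ i, L i = F (m i)) : ∀ i : ℕ, m i = m 0 - i := by
  have step : ∀ j : ℕ, m (j + 1) = m j - 1 := by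
    intro j
    have up := shiftIncl' v hv0 hvmul hsurj F hF L hg (j+1) (m (j+1)) (hm _) 1 (by push_cast; omega)
    have hidx : ((((j+1:ℕ)):ℤ) - 1).toNat = j := by omega
    rw [hidx, hm j] at up
    have h1 : m (j+1) + 1 ≤ m j := Fle' v hv0 hsurj F hF _ _ up
    have dn := shiftIncl' v hv0 hvmul hsurj F hF L hg j (m j) (hm _) (-1) (by omega)
    have hidx2 : (((j:ℕ):ℤ) - (-1)).toNat = j + 1 := by omega
    rw [hidx2, hm (j+1)] at dn
    have h2 : m j - 1 ≤ m (j+1) := Fle' v hv0 hsurj F hF _ _ dn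
    omega
  intro i
  induction i with
  | zero => simp
  | succ k ih => rw [step k, ih]; push_cast; omega

-- top propagation
include hv0 hsurj hF in
lemma glider_top' (L : ℕ → Submodule ℤ K) (hg : IsGlider F L) (j : ℕ) (hj : L j = ⊤) :
    ∀ t : ℕ, L t = ⊤ := by
  intro t
  rw [Submodule.eq_top_iff']
  intro y
  by_cases hy0 : y = 0
  · rw [hy0]; exact (L t).zero_mem
  obtain ⟨a, ha0, hva⟩ := existsv' v hv0 hsurj ((t:ℤ) - j)
  have haF : a ∈ F ((j:ℤ) - t) := by
    rw [hF, hva]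
    exact_mod_cast le_of_eq (by omega : -((j:ℤ) - t) = (t:ℤ) - j)
  have hbL : a⁻¹ * y ∈ L j := hj ▸ Submodule.mem_top
  have := hg.2 ((j:ℤ) - t) j (by omega) a haF _ hbL
  rw [mul_inv_cancel_left₀ ha0] at this
  have hidx : ((j:ℤ) - ((j:ℤ) - t)).toNat = t := by omega
  rwa [hidx] at this

-- the standard glider
include hv0 hvmul hF in
lemma stdGlider' (n : ℤ) : IsGlider F (fun i : ℕ => F (n - (i:ℤ))) := by
  constructor
  · intro i j hij
    exact Fmono' v F hF (show n - (j:ℤ) ≤ n - (i:ℤ) by omega)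
  · intro i j hij a ha m hm
    rw [hF] at ha hm ⊢
    have hidx : ((((j:ℤ) - i).toNat):ℤ) = (j:ℤ) - i := Int.toNat_of_nonneg (by omega)
    rw [hvmul, hidx]
    calc ((-(n - ((j:ℤ) - i)) : ℤ) : WithTop ℤ) = ((-i : ℤ) : WithTop ℤ) + ((-(n - j) : ℤ) : WithTop ℤ) := by
          rw [← WithTop.coe_add]
          exact congrArg (fun z : ℤ => (z : WithTop ℤ)) (by ring)
      _ ≤ v a + v m := add_le_add ha hm
end

/-- For a discrete valuation `v` on a field `K` with valuation ring `O_v = F 0` and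
`F n = {x : v x ≥ -n}` the `v`-adic filtration, the irreducible left
`F`-glider ideals in `K` are precisely the chains `i ↦ F (n - i)` for `n : ℤ`;
so `GBS_{F^v}(K)` is in bijection with `ℤ`. -/
theorem stmt_7 {K : Type*} [Field K] (v : K → WithTop ℤ)
    (hv0 : ∀ x : K, v x = ⊤ ↔ x = 0)
    (hvmul : ∀ x y : K, v (x * y) = v x + v y)
    (hvadd : ∀ x y : K, min (v x) (v y) ≤ v (x + y))
    (hsurj : ∀ n : ℤ, ∃ x : K, v x = (n : WithTop ℤ))
    (F : ℤ → Submodule ℤ K)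
    (hF : ∀ (n : ℤ) (x : K), x ∈ F n ↔ ((-n : ℤ) : WithTop ℤ) ≤ v x) :
    (∀ L : ℕ → Submodule ℤ K,
        (IsIrreducibleGlider F L ∧ L 0 ≠ ⊥) ↔ ∃ n : ℤ, ∀ i : ℕ, L i = F (n - (i : ℤ))) ∧
    Function.Injective (fun n : ℤ => (fun i : ℕ => F (n - (i : ℤ)))) := by
  constructor
  · intro L
    constructor
    · rintro ⟨⟨hg, hirr⟩, hne⟩
      -- no L j can be ⊤
      have htop : ∀ j, L j ≠ ⊤ := by
        intro j hj
        have hall : ∀ t, L t = ⊤ := glider_top' v hv0 hsurj F hF L hg j hj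
        have hsub := hirr (fun i : ℕ => F ((0:ℤ) - (i:ℤ))) (stdGlider' v hv0 hvmul F hF 0)
          (fun i => by rw [hall i]; exact le_top)
        rcases hsub with ⟨n, h1, _⟩ | ⟨n, h1, _⟩ | ⟨α, _, h1, _⟩
        · rw [bodyBot' v hv0 F hF 0] at h1
          exact Fne_bot' v hv0 hsurj F hF _ h1
        · exact Fne_bot' v hv0 hsurj F hF _ h1
        · have h2 := h1 0
          rw [hall (α 0)] at h2
          exact Fne_top' v hv0 hsurj F hF _ h2
      have hb : ∀ j, L j ≠ ⊥ := glider_ne_bot' v hv0 hsurj F hF L hg hne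
      have hO : ∀ j, ∀ a ∈ F 0, ∀ x ∈ L j, a * x ∈ L j := by
        intro j a ha x hx
        have h := hg.2 0 j (by omega) a ha x hx
        have hidx : (((j:ℕ):ℤ) - 0).toNat = j := by omega
        rwa [hidx] at h
      choose m hm using fun j => classify' v hv0 hvmul F hF (L j) (hO j) (hb j) (htop j)
      refine ⟨m 0, fun i => ?_⟩
      rw [hm i, slope' v hv0 hvmul hsurj F hF L hg m hm i]
    · rintro ⟨n, hn⟩
      have hL : L = fun i : ℕ => F (n - (i:ℤ)) := funext hn
      subst hL
      refine ⟨⟨stdGlider' v hv0 hvmul F hF n, ?_⟩, Fne_bot' v hv0 hsurj F hF _⟩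
      intro N hgN hNle
      by_cases hN0 : N 0 = ⊥
      · exact Or.inr (Or.inl ⟨0, hN0, Fne_bot' v hv0 hsurj F hF _⟩)
      · have hNb : ∀ j, N j ≠ ⊥ := glider_ne_bot' v hv0 hsurj F hF N hgN hN0
        have hNt : ∀ j, N j ≠ ⊤ := by
          intro j hj
          have h2 : F (n - (j:ℤ)) = ⊤ := top_le_iff.mp (hj ▸ hNle j)
          exact Fne_top' v hv0 hsurj F hF _ h2
        have hON : ∀ j, ∀ a ∈ F 0, ∀ x ∈ N j, a * x ∈ N j := by
          intro j a ha x hx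
          have h := hgN.2 0 j (by omega) a ha x hx
          have hidx : (((j:ℕ):ℤ) - 0).toNat = j := by omega
          rwa [hidx] at h
        choose k hk using fun j => classify' v hv0 hvmul F hF (N j) (hON j) (hNb j) (hNt j)
        have hs := slope' v hv0 hvmul hsurj F hF N hgN k hk
        have hk0 : k 0 ≤ n := by
          have h1 := hNle 0
          rw [hk 0] at h1
          have h2 := Fle' v hv0 hsurj F hF _ _ h1
          omega
        refine Or.inr (Or.inr ⟨fun i => i + (n - k 0).toNat,
          fun a b hab => Nat.add_le_add_right hab _,
          fun i => ?_, fun m' n' hmn => ?_⟩)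
        · rw [hk i, hs i]
          show F (k 0 - (i:ℤ)) = F (n - ((i + (n - k 0).toNat : ℕ) : ℤ))
          congr 1
          omega
        · show ((n' - m' + (n - k 0).toNat : ℕ) : ℤ) ≤ ((n' + (n - k 0).toNat : ℕ) : ℤ) - (m' : ℤ)
          push_cast
          omega
  · intro a b hab
    have h0 : F (a - ((0:ℕ):ℤ)) = F (b - ((0:ℕ):ℤ)) := congrFun hab 0
    have h1 := Fle' v hv0 hsurj F hF _ _ (le_of_eq h0)
    have h2 := Fle' v hv0 hsurj F hF _ _ (le_of_eq h0.symm)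
    omega
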